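/- Let r > 0, β > 0, γ ∈ (0, π/2), and let c > 0 satisfy tanh(cβ) = c·tan(γ). Set T = 2πr/√(1 + c²) and define u : ℝ × ℝ → ℝ by u(t,s) = (e^{cs} - e^{-cs})·sin(2πt/T). Then for all (t,s): (i) ∂²u/∂t²(t,s) + (1/r²)·∂²u/∂s²(t,s) + (1/r²)·u(t,s) = 0; (ii) u(t,0) = 0; (iii) ∂u/∂s(t, β) - cot(γ)·u(t, β) = 0; (iv) u(t + T, s) = u(t, s). -/

import Mathlib

private lemma sin_hd (k t : ℝ) :
    HasDerivAt (fun t' => Real.sin (k * t')) (k * Real.cos (k * t)) t := by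
  exact ((Real.hasDerivAt_sin (k * t)).comp t ((hasDerivAt_id t).const_mul k)).congr_deriv (by simp [mul_comm])

private lemma cos_hd (k t : ℝ) :
    HasDerivAt (fun t' => Real.cos (k * t')) (-(k * Real.sin (k * t))) t := by
  exact ((Real.hasDerivAt_cos (k * t)).comp t ((hasDerivAt_id t).const_mul k)).congr_deriv (by simp [mul_comm])

private lemma f_hd (c s : ℝ) :
    HasDerivAt (fun s' => Real.exp (c * s') - Real.exp (-(c * s')))
      (c * Real.exp (c * s) + c * Real.exp (-(c * s))) s := by
  have hlin : HasDerivAt (fun s' : ℝ => c * s') c s := by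
    simpa using (hasDerivAt_id s).const_mul c
  have h1 : HasDerivAt (fun s' => Real.exp (c * s')) (Real.exp (c * s) * c) s :=
    (Real.hasDerivAt_exp (c * s)).comp s hlin
  have h2 : HasDerivAt (fun s' => Real.exp (-(c * s'))) (Real.exp (-(c * s)) * (-c)) s :=
    by have h := (Real.hasDerivAt_exp (-(c * s))).comp s hlin.neg; exact h
  exact (h1.sub h2).congr_deriv (by ring)

theorem jacobi_kernel_eigenfunction_robin (r β γ c T : ℝ) (u : ℝ → ℝ → ℝ)
    (hr : 0 < r) (hβ : 0 < β) (hγ : γ ∈ Set.Ioo 0 (Real.pi / 2)) (hc : 0 < c)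
    (hroot : Real.tanh (c * β) = c * Real.tan γ)
    (hT : T = 2 * Real.pi * r / Real.sqrt (1 + c ^ 2))
    (hu : ∀ t s, u t s = (Real.exp (c * s) - Real.exp (-(c * s))) * Real.sin (2 * Real.pi * t / T)) :
    (∀ t s, deriv (deriv (fun t' => u t' s)) t +
        (1 / r ^ 2) * deriv (deriv (fun s' => u t s')) s + (1 / r ^ 2) * u t s = 0) ∧
    (∀ t, u t 0 = 0) ∧
    (∀ t, deriv (fun s' => u t s') β - Real.cot γ * u t β = 0) ∧
    (∀ t s, u (t + T) s = u t s) := by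
  have hsq : (0:ℝ) < 1 + c ^ 2 := by positivity
  have hsqrt : 0 < Real.sqrt (1 + c ^ 2) := Real.sqrt_pos.mpr hsq
  have hTpos : 0 < T := by rw [hT]; positivity
  have hTne : T ≠ 0 := ne_of_gt hTpos
  set k : ℝ := 2 * Real.pi / T with hk
  have harg : ∀ t : ℝ, 2 * Real.pi * t / T = k * t := by intro t; rw [hk]; ring
  -- u t s = f s * sin (k t)
  have hu' : ∀ t s, u t s = (Real.exp (c * s) - Real.exp (-(c * s))) * Real.sin (k * t) := by
    intro t s; rw [hu, harg]
  have hksq : k ^ 2 = (1 + c ^ 2) / r ^ 2 := by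
    rw [hk, hT]
    have h2π : (2 : ℝ) * Real.pi ≠ 0 := by positivity
    field_simp
    rw [Real.sq_sqrt hsq.le]
  -- t-derivatives
  have hd1 : ∀ s t, deriv (fun t' => u t' s) t
      = (Real.exp (c * s) - Real.exp (-(c * s))) * (k * Real.cos (k * t)) := by
    intro s t
    have : (fun t' => u t' s) = fun t' => (Real.exp (c * s) - Real.exp (-(c * s))) * Real.sin (k * t') := by
      funext t'; exact hu' t' s
    rw [this]
    exact (((sin_hd k t).const_mul _)).deriv
  have hd2 : ∀ s t, deriv (deriv (fun t' => u t' s)) t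
      = (Real.exp (c * s) - Real.exp (-(c * s))) * (-(k ^ 2 * Real.sin (k * t))) := by
    intro s t
    have : deriv (fun t' => u t' s)
        = fun t' => (Real.exp (c * s) - Real.exp (-(c * s))) * (k * Real.cos (k * t')) := by
      funext t'; exact hd1 s t'
    rw [this]
    have h := (((cos_hd k t).const_mul k).const_mul (Real.exp (c * s) - Real.exp (-(c * s)))).deriv
    rw [h]; ring
  -- s-derivatives
  have he1 : ∀ t s, deriv (fun s' => u t s') s
      = (c * Real.exp (c * s) + c * Real.exp (-(c * s))) * Real.sin (k * t) := by
    intro t s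
    have : (fun s' => u t s') = fun s' => (Real.exp (c * s') - Real.exp (-(c * s'))) * Real.sin (k * t) := by
      funext s'; exact hu' t s'
    rw [this]
    exact ((f_hd c s).mul_const _).deriv
  have he2 : ∀ t s, deriv (deriv (fun s' => u t s')) s
      = (c ^ 2 * Real.exp (c * s) - c ^ 2 * Real.exp (-(c * s))) * Real.sin (k * t) := by
    intro t s
    have : deriv (fun s' => u t s')
        = fun s' => (c * Real.exp (c * s') + c * Real.exp (-(c * s'))) * Real.sin (k * t) := by
      funext s'; exact he1 t s'
    rw [this]
    have hlin : HasDerivAt (fun s' : ℝ => c * s') c s := by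
      simpa using (hasDerivAt_id s).const_mul c
    have h1 : HasDerivAt (fun s' => Real.exp (c * s')) (Real.exp (c * s) * c) s :=
      (Real.hasDerivAt_exp (c * s)).comp s hlin
    have h2 : HasDerivAt (fun s' => Real.exp (-(c * s'))) (Real.exp (-(c * s)) * (-c)) s :=
      by have h := (Real.hasDerivAt_exp (-(c * s))).comp s hlin.neg; exact h
    have h := ((((h1.const_mul c).add (h2.const_mul c))).mul_const (Real.sin (k * t))).deriv
    exact h.trans (by ring)
  refine ⟨?_, ?_, ?_, ?_⟩
  · intro t s
    have hrne : r ^ 2 ≠ 0 := by positivity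
    rw [hd2, he2, hu', hksq]
    field_simp
    ring
  · intro t; rw [hu']; simp
  · intro t
    rw [he1, hu']
    obtain ⟨hγ0, hγ2⟩ := hγ
    have hsin : Real.sin γ ≠ 0 := ne_of_gt (Real.sin_pos_of_pos_of_lt_pi hγ0 (lt_trans hγ2 (by linarith [Real.pi_pos])))
    have hcos : Real.cos γ ≠ 0 := ne_of_gt (Real.cos_pos_of_mem_Ioo ⟨by linarith [Real.pi_pos], hγ2⟩)
    have key : Real.exp (c * β) - Real.exp (-(c * β))
        = c * Real.tan γ * (Real.exp (c * β) + Real.exp (-(c * β))) := by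
      have h := hroot
      rw [Real.tanh_eq_sinh_div_cosh, Real.sinh_eq, Real.cosh_eq] at h
      have hpos : (0:ℝ) < Real.exp (c * β) + Real.exp (-(c * β)) := by positivity
      field_simp at h
      linarith
    rw [key, Real.cot_eq_cos_div_sin, Real.tan_eq_sin_div_cos]
    field_simp
    ring
  · intro t s
    rw [hu' (t + T) s, hu' t s]
    have : k * (t + T) = k * t + 2 * Real.pi := by
      rw [hk]; field_simp
    rw [this, Real.sin_add_two_pi]
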